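/- arXiv:1305.4558 — 5 statements merged into one kernel-verified Lean document; each statement's English description precedes it below -/
import Mathlib

section
/- Let ρ_min = min U. If the stored energy satisfies 0 < e < ρ_min, then ρ_min is an optimal decision at any slot n in the static-channel dynamic program: Vₙ(e,h_i,ρ_min) ≥ Vₙ(e,h_i,ρ) for every ρ ∈ U, where Vₙ(e,h_i,ρ) = g_r(e,ρ) + Σ_j q_{ij} V_{n-1}*((e−ρ)₊ + h_j, h_j). -/
/-- Dynamic programming value function `Vₙ*(e, i)` for the finite-horizon
energy-harvesting throughput maximization problem (static channel). -/
noncomputable def V (g : ℝ → ℝ) {ι : Type} [Fintype ι] (h : ι → ℝ) (q : ι → ι → ℝ)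
    (U : Finset ℝ) (hU : U.Nonempty) : ℕ → ℝ → ι → ℝ
  | 0, _, _ => 0
  | n + 1, e, i => U.sup' hU fun ρ =>
      g ρ * min (e / ρ) 1 + ∑ j, q i j * V g h q U hU n (max (e - ρ) 0 + h j) j

/-- One-step value `Vₙ₊₁(e, i, ρ)` of choosing power `ρ` with `n` further slots remaining. -/
noncomputable def Q (g : ℝ → ℝ) {ι : Type} [Fintype ι] (h : ι → ℝ) (q : ι → ι → ℝ)
    (U : Finset ℝ) (hU : U.Nonempty) (n : ℕ) (i : ι) (e ρ : ℝ) : ℝ :=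
  g ρ * min (e / ρ) 1 + ∑ j, q i j * V g h q U hU n (max (e - ρ) 0 + h j) j

lemma slope_anti {g : ℝ → ℝ} (hconc : StrictConcaveOn ℝ (Set.Ici 0) g) (hg0 : g 0 = 0)
    {a b : ℝ} (ha : 0 < a) (hab : a ≤ b) : g b / b ≤ g a / a := by
  rcases eq_or_lt_of_le hab with rfl | hlt
  · exact le_refl _
  · have hb : 0 < b := ha.trans hlt
    have ht : 0 < a / b := div_pos ha hb
    have ht1 : a / b < 1 := (div_lt_one hb).2 hlt
    have key := hconc.2 (Set.mem_Ici.2 (le_refl (0:ℝ)))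
      (Set.mem_Ici.2 hb.le) (show (0:ℝ) ≠ b from hb.ne)
      (show (0:ℝ) < 1 - a / b by linarith) ht (by ring)
    have hxy : (1 - a / b) • (0:ℝ) + (a / b) • b = a := by
      rw [smul_zero, zero_add, smul_eq_mul, div_mul_cancel₀ a hb.ne']
    rw [hxy, hg0, smul_zero, zero_add, smul_eq_mul] at key
    rw [div_mul_eq_mul_div, div_lt_iff₀ hb] at key
    rw [div_le_div_iff₀ hb ha]
    nlinarith

theorem stmt5 {ι : Type} [Fintype ι] (g : ℝ → ℝ) (hconc : StrictConcaveOn ℝ (Set.Ici 0) g)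
    (hmono : StrictMonoOn g (Set.Ici 0)) (hg0 : g 0 = 0)
    (h : ι → ℝ) (hh : ∀ j, 0 ≤ h j)
    (q : ι → ι → ℝ) (hq : ∀ i j, 0 ≤ q i j) (hq1 : ∀ i, ∑ j, q i j = 1)
    (U : Finset ℝ) (hU : U.Nonempty) (hUpos : ∀ ρ ∈ U, (0:ℝ) < ρ) :
    ∀ (n : ℕ) (i : ι) (e : ℝ), 0 < e → e < U.min' hU →
      ∀ ρ ∈ U, Q g h q U hU n i e ρ ≤ Q g h q U hU n i e (U.min' hU) := by
  intro n i e he hem ρ hρ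
  set m := U.min' hU with hm
  have hmU : m ∈ U := U.min'_mem hU
  have hmpos : 0 < m := hUpos m hmU
  have hmρ : m ≤ ρ := U.min'_le ρ hρ
  have hρpos : 0 < ρ := hUpos ρ hρ
  have heρ : e < ρ := lt_of_lt_of_le hem hmρ
  have hmax1 : max (e - ρ) 0 = 0 := max_eq_right (by linarith)
  have hmax2 : max (e - m) 0 = 0 := max_eq_right (by linarith)
  have hmin1 : min (e / ρ) 1 = e / ρ := min_eq_left ((div_le_one hρpos).2 heρ.le)
  have hmin2 : min (e / m) 1 = e / m := min_eq_left ((div_le_one hmpos).2 hem.le)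
  unfold Q
  rw [hmax1, hmax2, hmin1, hmin2]
  have hslope : g ρ / ρ ≤ g m / m := slope_anti hconc hg0 hmpos hmρ
  have : g ρ * (e / ρ) ≤ g m * (e / m) := by
    have h1 : g ρ * (e / ρ) = (g ρ / ρ) * e := by ring
    have h2 : g m * (e / m) = (g m / m) * e := by ring
    rw [h1, h2]
    exact mul_le_mul_of_nonneg_right hslope he.le
  linarith
end

section
/- (Lemma 1) Let ρ, ρ' ∈ U with ρ > ρ', ρ_max = max U, and suppose all harvest values h_j are positive. If e > (n−1)ρ_max + ρ, then Vₙ(e,h_i,ρ) > Vₙ(e,h_i,ρ') for every harvest state h_i, where Vₙ(e,h_i,ρ) = g_r(e,ρ) + Σ_j q_{ij} V_{n-1}*((e−ρ)₊ + h_j, h_j). -/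
lemma Vsat {ι : Type} [Fintype ι] (g : ℝ → ℝ)
    (hmono : StrictMonoOn g (Set.Ici 0))
    (h : ι → ℝ) (hh : ∀ j, 0 < h j)
    (q : ι → ι → ℝ) (hq1 : ∀ i, ∑ j, q i j = 1)
    (U : Finset ℝ) (hU : U.Nonempty) (hUpos : ∀ ρ ∈ U, (0:ℝ) < ρ) :
    ∀ (n : ℕ) (e : ℝ) (i : ι), (n : ℝ) * U.max' hU ≤ e →
      V g h q U hU n e i = n * g (U.max' hU) := by
  intro n
  induction n with
  | zero => intro e i _; simp [V]
  | succ n ih =>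
    intro e i he
    set M := U.max' hU with hM
    have hMU : M ∈ U := U.max'_mem hU
    have hMpos : 0 < M := hUpos _ hMU
    have hnM : (n : ℝ) * M ≥ 0 := by positivity
    have heM : M ≤ e := by push_cast at he; nlinarith
    have key : ∀ ρ ∈ U,
        (g ρ * min (e / ρ) 1 + ∑ j, q i j * V g h q U hU n (max (e - ρ) 0 + h j) j)
          = g ρ + (n : ℝ) * g M := by
      intro ρ hρ
      have hρpos : 0 < ρ := hUpos _ hρ
      have hρM : ρ ≤ M := Finset.le_max' U ρ hρ
      have hρe : ρ ≤ e := hρM.trans heM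
      have hmin : min (e / ρ) 1 = 1 := by
        apply min_eq_right; rw [le_div_iff₀ hρpos]; linarith
      have hmax : max (e - ρ) 0 = e - ρ := by
        apply max_eq_left; linarith
      have hVj : ∀ j, V g h q U hU n (max (e - ρ) 0 + h j) j = n * g M := by
        intro j
        apply ih
        have := hh j
        push_cast at he ⊢
        rw [hmax]
        nlinarith
      simp only [hVj, hmin]
      rw [← Finset.sum_mul, hq1 i]
      ring
    rw [V]
    apply le_antisymm
    · apply Finset.sup'_le
      intro ρ hρ
      rw [key ρ hρ]
      have : g ρ ≤ g M := hmono.monotoneOn (Set.mem_Ici.2 (hUpos _ hρ).le)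
        (Set.mem_Ici.2 hMpos.le) (Finset.le_max' U ρ hρ)
      push_cast
      linarith
    · have := Finset.le_sup' (f := fun ρ =>
        g ρ * min (e / ρ) 1 + ∑ j, q i j * V g h q U hU n (max (e - ρ) 0 + h j) j) hMU
      rw [key M hMU] at this
      push_cast
      linarith

theorem stmt6 {ι : Type} [Fintype ι] (g : ℝ → ℝ) (hconc : ConcaveOn ℝ (Set.Ici 0) g)
    (hmono : StrictMonoOn g (Set.Ici 0)) (hg0 : g 0 = 0)
    (h : ι → ℝ) (hh : ∀ j, 0 < h j)
    (q : ι → ι → ℝ) (hq : ∀ i j, 0 ≤ q i j) (hq1 : ∀ i, ∑ j, q i j = 1)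
    (U : Finset ℝ) (hU : U.Nonempty) (hUpos : ∀ ρ ∈ U, (0:ℝ) < ρ)
    (ρ ρ' : ℝ) (hρU : ρ ∈ U) (hρ'U : ρ' ∈ U) (hlt : ρ' < ρ)
    (n : ℕ) (i : ι) (e : ℝ) (he : (n : ℝ) * U.max' hU + ρ < e) :
    Q g h q U hU n i e ρ' < Q g h q U hU n i e ρ := by
  set M := U.max' hU with hM
  have hMU : M ∈ U := U.max'_mem hU
  have hρM : ρ ≤ M := Finset.le_max' U ρ hρU
  have hρpos : 0 < ρ := hUpos _ hρU
  have hρ'pos : 0 < ρ' := hUpos _ hρ'U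
  have hMpos : 0 < M := hUpos _ hMU
  have hnM : (n : ℝ) * M ≥ 0 := mul_nonneg (Nat.cast_nonneg n) hMpos.le
  have hρe : ρ ≤ e := by linarith
  have hρ'e : ρ' ≤ e := by linarith
  have hmin : min (e / ρ) 1 = 1 := by
    apply min_eq_right; rw [le_div_iff₀ hρpos]; linarith
  have hmin' : min (e / ρ') 1 = 1 := by
    apply min_eq_right; rw [le_div_iff₀ hρ'pos]; linarith
  have hmax : max (e - ρ) 0 = e - ρ := by apply max_eq_left; linarith
  have hmax' : max (e - ρ') 0 = e - ρ' := by apply max_eq_left; linarith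
  have hVj : ∀ j, V g h q U hU n (max (e - ρ) 0 + h j) j = n * g M := by
    intro j
    apply Vsat g hmono h hh q hq1 U hU hUpos
    have := hh j
    rw [hmax]; linarith
  have hVj' : ∀ j, V g h q U hU n (max (e - ρ') 0 + h j) j = n * g M := by
    intro j
    apply Vsat g hmono h hh q hq1 U hU hUpos
    have := hh j
    rw [hmax']; linarith
  have hg : g ρ' < g ρ := hmono (Set.mem_Ici.2 hρ'pos.le) (Set.mem_Ici.2 hρpos.le) hlt
  unfold Q
  simp only [hVj, hVj', hmin, hmin']
  linarith
end

section
/- (Lemma 2) Let ρ, ρ' ∈ U with ρ > ρ' > 0. If e ≤ (g(ρ')/g(ρ))·ρ, then Vₙ(e,h_i,ρ) ≤ Vₙ(e,h_i,ρ') for every n ≥ 1 and harvest state h_i, where Vₙ(e,h_i,ρ) = g_r(e,ρ) + Σ_j q_{ij} V_{n-1}*((e−ρ)₊ + h_j, h_j). -/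
lemma V_mono (g : ℝ → ℝ) {ι : Type} [Fintype ι] (h : ι → ℝ) (q : ι → ι → ℝ)
    (U : Finset ℝ) (hU : U.Nonempty)
    (hg : ∀ σ ∈ U, 0 ≤ g σ) (hUpos : ∀ σ ∈ U, (0:ℝ) < σ)
    (hq : ∀ i j, 0 ≤ q i j) :
    ∀ (n : ℕ) (i : ι) (e e' : ℝ), e ≤ e' →
      V g h q U hU n e i ≤ V g h q U hU n e' i := by
  intro n
  induction n with
  | zero => intro i e e' _; simp [V]
  | succ n ih =>
    intro i e e' hee
    show U.sup' hU _ ≤ U.sup' hU _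
    apply Finset.sup'_le
    intro σ hσ
    refine le_trans ?_ (Finset.le_sup' _ hσ)
    have hσ0 := hUpos σ hσ
    apply add_le_add
    · exact mul_le_mul_of_nonneg_left
        (min_le_min ((div_le_div_iff_of_pos_right hσ0).2 hee) le_rfl) (hg σ hσ)
    · refine Finset.sum_le_sum fun j _ => ?_
      refine mul_le_mul_of_nonneg_left (ih j _ _ ?_) (hq i j)
      exact add_le_add (max_le_max (by linarith) le_rfl) le_rfl

theorem stmt7 {ι : Type} [Fintype ι] (g : ℝ → ℝ) (hconc : StrictConcaveOn ℝ (Set.Ici 0) g)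
    (hmono : StrictMonoOn g (Set.Ici 0)) (hg0 : g 0 = 0)
    (h : ι → ℝ) (hh : ∀ j, 0 ≤ h j)
    (q : ι → ι → ℝ) (hq : ∀ i j, 0 ≤ q i j) (hq1 : ∀ i, ∑ j, q i j = 1)
    (U : Finset ℝ) (hU : U.Nonempty) (hUpos : ∀ ρ ∈ U, (0:ℝ) < ρ)
    (ρ ρ' : ℝ) (hρU : ρ ∈ U) (hρ'U : ρ' ∈ U) (hlt : ρ' < ρ)
    (n : ℕ) (i : ι) (e : ℝ) (he0 : 0 ≤ e) (he : e ≤ g ρ' / g ρ * ρ) :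
    Q g h q U hU n i e ρ ≤ Q g h q U hU n i e ρ' := by
  have hρ0 : (0:ℝ) < ρ := hUpos ρ hρU
  have hρ'0 : (0:ℝ) < ρ' := hUpos ρ' hρ'U
  have hgρ' : 0 < g ρ' := by
    have := hmono Set.self_mem_Ici (le_of_lt hρ'0) hρ'0
    rwa [hg0] at this
  have hgρ : 0 < g ρ := by
    have := hmono Set.self_mem_Ici (le_of_lt hρ0) hρ0
    rwa [hg0] at this
  have hglt : g ρ' < g ρ := hmono (le_of_lt hρ'0) (le_of_lt hρ0) hlt
  have heρ : e ≤ ρ := by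
    refine le_trans he ?_
    calc g ρ' / g ρ * ρ ≤ 1 * ρ := by
          gcongr
          exact (div_le_one hgρ).2 (le_of_lt hglt)
      _ = ρ := one_mul ρ
  have hmax : max (e - ρ) 0 = 0 := max_eq_right (by linarith)
  -- slope inequality: g ρ / ρ ≤ g ρ' / ρ'
  have hslope : g ρ / ρ ≤ g ρ' / ρ' := by
    have ha : (0:ℝ) ≤ ρ' / ρ := by positivity
    have hb : (0:ℝ) ≤ 1 - ρ' / ρ := by
      have : ρ' / ρ ≤ 1 := (div_le_one hρ0).2 (le_of_lt hlt)
      linarith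
    have hcc := hconc.concaveOn.2 (Set.mem_Ici.2 (le_of_lt hρ0))
      Set.self_mem_Ici ha hb (by ring)
    have hx : (ρ' / ρ) • ρ + (1 - ρ' / ρ) • (0:ℝ) = ρ' := by
      simp only [smul_eq_mul, mul_zero, add_zero]
      field_simp
    rw [hx, hg0, smul_eq_mul, smul_eq_mul, mul_zero, add_zero] at hcc
    rw [div_mul_eq_mul_div] at hcc
    have hcc2 := (div_le_iff₀ hρ0).1 hcc
    rw [div_le_div_iff₀ hρ0 hρ'0]
    linarith
  -- first term
  have hterm1 : g ρ * min (e / ρ) 1 ≤ g ρ' * min (e / ρ') 1 := by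
    have h1 : min (e / ρ) 1 = e / ρ := min_eq_left ((div_le_one hρ0).2 heρ)
    rw [h1]
    rcases le_total (e / ρ') 1 with hc | hc
    · rw [min_eq_left hc]
      calc g ρ * (e / ρ) = e * (g ρ / ρ) := by ring
        _ ≤ e * (g ρ' / ρ') := by gcongr
        _ = g ρ' * (e / ρ') := by ring
    · rw [min_eq_right hc]
      have h2 : g ρ * (e / ρ) ≤ g ρ * ((g ρ' / g ρ * ρ) / ρ) := by gcongr
      have h3 : g ρ * ((g ρ' / g ρ * ρ) / ρ) = g ρ' := by field_simp
      linarith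
  -- second term
  have hg' : ∀ σ ∈ U, 0 ≤ g σ := fun σ hσ => by
    have hσ0 := hUpos σ hσ
    have := hmono Set.self_mem_Ici (le_of_lt hσ0) hσ0
    rw [hg0] at this; linarith
  have hterm2 : ∀ j, V g h q U hU n (max (e - ρ) 0 + h j) j
      ≤ V g h q U hU n (max (e - ρ') 0 + h j) j := by
    intro j
    apply V_mono g h q U hU hg' hUpos hq
    rw [hmax]
    have : (0:ℝ) ≤ max (e - ρ') 0 := le_max_right _ _
    linarith
  unfold Q
  gcongr with j
  · exact hq i j
  · exact hterm2 j
end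

section
/- (Water level characterization) Fix n ≥ 1, channel gains γ_1,…,γ_n > 0, harvests H_1,…,H_{n-1} ≥ 0 and stored energy e ≥ 0. Suppose w ≥ 0 satisfies the constraints Σ_{k=a}^{n} (w − 1/γ_k)₊ ≤ e + Σ_{k=a}^{n-1} H_k for all a ∈ {1,…,n−1} together with w ≤ e + 1/γ_n. Then w satisfies w ≤ min_{a∈{1,…,n}} [ e + 1/γ_n + Σ_{k=a}^{n-1}(H_k + 1/γ_k) − Σ_{k=a}^{n}(1/γ_k − w)₊ ] / (n−a+1). -/
theorem stmt17 (n : ℕ) (hn : 1 ≤ n) (γ : ℕ → ℝ) (hγ : ∀ k, 0 < γ k)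
    (H : ℕ → ℝ) (hH : ∀ k, 0 ≤ H k) (e : ℝ) (he : 0 ≤ e) (w : ℝ) (hw : 0 ≤ w)
    (hcon : ∀ a ∈ Finset.Icc 1 (n - 1),
      ∑ k ∈ Finset.Icc a n, max (w - 1 / γ k) 0 ≤ e + ∑ k ∈ Finset.Icc a (n - 1), H k)
    (hlast : w ≤ e + 1 / γ n) :
    w ≤ (Finset.Icc 1 n).inf' (Finset.nonempty_Icc.mpr hn) (fun a =>
      (e + 1 / γ n + ∑ k ∈ Finset.Icc a (n - 1), (H k + 1 / γ k) -
        ∑ k ∈ Finset.Icc a n, max (1 / γ k - w) 0) / ((n - a + 1 : ℕ) : ℝ)) := by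
  apply Finset.le_inf'
  intro a ha
  rw [Finset.mem_Icc] at ha
  obtain ⟨ha1, han⟩ := ha
  have hc : (0:ℝ) < ((n - a + 1 : ℕ) : ℝ) := by
    have : 0 < n - a + 1 := Nat.succ_pos _
    exact_mod_cast this
  rw [le_div_iff₀ hc]
  rcases eq_or_lt_of_le han with rfl | hlt
  · have hemp : Finset.Icc a (a - 1) = (∅ : Finset ℕ) := Finset.Icc_eq_empty (by omega)
    rw [Nat.sub_self, hemp]
    simp only [Finset.sum_empty, Finset.Icc_self, Finset.sum_singleton, Nat.cast_one, mul_one]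
    have h1 : (0:ℝ) ≤ 1 / γ a := div_nonneg zero_le_one (hγ a).le
    rcases le_total (1 / γ a) w with h | h
    · rw [max_eq_right (by linarith)]; linarith
    · rw [max_eq_left (by linarith)]; linarith
  · have han1 : a ≤ n - 1 := by omega
    have hcon' := hcon a (Finset.mem_Icc.mpr ⟨ha1, han1⟩)
    have hkey : ∑ k ∈ Finset.Icc a n, max (w - 1 / γ k) 0
        = ∑ k ∈ Finset.Icc a n, (w - 1 / γ k) + ∑ k ∈ Finset.Icc a n, max (1 / γ k - w) 0 := by
      rw [← Finset.sum_add_distrib]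
      apply Finset.sum_congr rfl
      intro k _
      rcases le_total (1 / γ k) w with h | h
      · rw [max_eq_left (by linarith), max_eq_right (by linarith)]; ring
      · rw [max_eq_right (by linarith), max_eq_left (by linarith)]; ring
    have hsum : ∑ k ∈ Finset.Icc a n, (w - 1 / γ k)
        = ((n - a + 1 : ℕ) : ℝ) * w - ∑ k ∈ Finset.Icc a n, 1 / γ k := by
      rw [Finset.sum_sub_distrib, Finset.sum_const, Nat.card_Icc, nsmul_eq_mul,
        show n + 1 - a = n - a + 1 from by omega]
    have hsplit : ∑ k ∈ Finset.Icc a n, 1 / γ k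
        = ∑ k ∈ Finset.Icc a (n - 1), 1 / γ k + 1 / γ n := by
      have hn' : n = (n - 1) + 1 := by omega
      rw [hn', Finset.sum_Icc_succ_top (by omega : a ≤ (n-1)+1)]
      rw [← hn']
    have hHsplit : ∑ k ∈ Finset.Icc a (n - 1), (H k + 1 / γ k)
        = ∑ k ∈ Finset.Icc a (n - 1), H k + ∑ k ∈ Finset.Icc a (n - 1), 1 / γ k :=
      Finset.sum_add_distrib
    rw [hkey, hsum, hsplit] at hcon'
    rw [mul_comm]
    linarith
end

section
/- For any finite increasing sequence of positive powers ρ_1 < ρ_2 < … < ρ_K and g strictly concave increasing with g(0)=0, the single-slot optimal value V₁*(e) = max_{1≤m≤K} g(ρ_m)min(e/ρ_m,1) equals the explicit piecewise formula: V₁*(e) = g(ρ_m)·(e/ρ_m) for (g(ρ_{m-1})/g(ρ_m))ρ_m ≤ e < ρ_m, and V₁*(e) = g(ρ_m) for ρ_m ≤ e < (g(ρ_m)/g(ρ_{m+1}))ρ_{m+1} (with the convention g(ρ_0)=0 and ρ_{K+1}=∞). In particular V₁* is continuous, nondecreasing, and piecewise linear in e. -/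
lemma chord_lt {g : ℝ → ℝ} (hconc : StrictConcaveOn ℝ (Set.Ici 0) g) (hg0 : g 0 = 0)
    {a b : ℝ} (ha : 0 < a) (hab : a < b) : g b * a < g a * b := by
  have hb : 0 < b := ha.trans hab
  have h1 : 0 < a / b := div_pos ha hb
  have h2 : 0 < 1 - a / b := by
    have : a / b < 1 := (div_lt_one hb).mpr hab
    linarith
  have key := hconc.2 (Set.self_mem_Ici) (Set.mem_Ici.mpr hb.le) (ne_of_lt hb) h2 h1 (by ring)
  simp only [smul_eq_mul, mul_zero, hg0, zero_add] at key
  rw [div_mul_cancel₀ _ hb.ne'] at key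
  rw [div_mul_eq_mul_div, div_lt_iff₀ hb] at key
  nlinarith

lemma cont_sup' {ι : Type*} {s : Finset ι} (hs : s.Nonempty) (f : ι → ℝ → ℝ)
    (hf : ∀ i ∈ s, Continuous (f i)) :
    Continuous (fun e => s.sup' hs fun i => f i e) := by
  induction hs using Finset.Nonempty.cons_induction with
  | singleton a => simp only [Finset.sup'_singleton]; exact hf a (by simp)
  | cons a s ha hs ih =>
    have : (fun e => (Finset.cons a s ha).sup' (Finset.cons_nonempty ha) fun i => f i e)
        = fun e => max (f a e) (s.sup' hs fun i => f i e) := by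
      funext e; rw [Finset.sup'_cons]
    rw [this]
    exact Continuous.max (hf a (Finset.mem_cons_self a s))
      (ih fun i hi => hf i (Finset.mem_cons_of_mem hi))

theorem stmt19 (g : ℝ → ℝ) (hconc : StrictConcaveOn ℝ (Set.Ici 0) g)
    (hmono : StrictMonoOn g (Set.Ici 0)) (hg0 : g 0 = 0)
    (K : ℕ) (hK : 1 ≤ K) (ρ : ℕ → ℝ) (hpos : ∀ m ∈ Finset.Icc 1 K, 0 < ρ m)
    (hinc : ∀ m ∈ Finset.Icc 1 K, ∀ m' ∈ Finset.Icc 1 K, m < m' → ρ m < ρ m') :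
    -- single-slot optimal value V₁*(e)
    let V1 : ℝ → ℝ := fun e =>
      (Finset.Icc 1 K).sup' (Finset.nonempty_Icc.mpr hK) fun m => g (ρ m) * min (e / ρ m) 1
    -- linear pieces: (g(ρ_{m-1})/g(ρ_m))ρ_m ≤ e < ρ_m (with the convention g(ρ₀)=0)
    (∀ m ∈ Finset.Icc 1 K, ∀ e : ℝ,
      (if m = 1 then 0 else g (ρ (m - 1))) / g (ρ m) * ρ m ≤ e → e < ρ m →
      V1 e = g (ρ m) * (e / ρ m)) ∧
    -- flat pieces: ρ_m ≤ e < (g(ρ_m)/g(ρ_{m+1}))ρ_{m+1} (with ρ_{K+1} = ∞)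
    (∀ m ∈ Finset.Icc 1 K, ∀ e : ℝ, ρ m ≤ e →
      (m < K → e < g (ρ m) / g (ρ (m + 1)) * ρ (m + 1) → V1 e = g (ρ m)) ∧
      (m = K → V1 e = g (ρ K))) ∧
    Continuous V1 ∧ MonotoneOn V1 (Set.Ici 0) := by
  intro V1
  have hne : (Finset.Icc 1 K).Nonempty := Finset.nonempty_Icc.mpr hK
  have hgpos : ∀ m ∈ Finset.Icc 1 K, 0 < g (ρ m) := by
    intro m hm
    have := hmono Set.self_mem_Ici (Set.mem_Ici.mpr (hpos m hm).le) (hpos m hm)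
    rwa [hg0] at this
  have hgmono : ∀ m ∈ Finset.Icc 1 K, ∀ m' ∈ Finset.Icc 1 K, m < m' →
      g (ρ m) < g (ρ m') := by
    intro m hm m' hm' h
    exact hmono (Set.mem_Ici.mpr (hpos m hm).le) (Set.mem_Ici.mpr (hpos m' hm').le)
      (hinc m hm m' hm' h)
  have hratio : ∀ m ∈ Finset.Icc 1 K, ∀ m' ∈ Finset.Icc 1 K, m < m' →
      g (ρ m') * ρ m < g (ρ m) * ρ m' := by
    intro m hm m' hm' h
    exact chord_lt hconc hg0 (hpos m hm) (hinc m hm m' hm' h)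
  refine ⟨?_, ?_, ?_, ?_⟩
  · -- linear pieces
    intro m hm e he1 he2
    have hm1 : 1 ≤ m := (Finset.mem_Icc.mp hm).1
    have hmK : m ≤ K := (Finset.mem_Icc.mp hm).2
    have hρm : 0 < ρ m := hpos m hm
    have hgm : 0 < g (ρ m) := hgpos m hm
    have he0 : 0 ≤ e := by
      rcases eq_or_ne m 1 with h1 | h1
      · rw [if_pos h1] at he1; simpa using he1
      · have hm2 : 2 ≤ m := by omega
        have hm1mem : m - 1 ∈ Finset.Icc 1 K := Finset.mem_Icc.mpr ⟨by omega, by omega⟩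
        rw [if_neg h1] at he1
        have : (0:ℝ) ≤ g (ρ (m-1)) / g (ρ m) * ρ m :=
          mul_nonneg (div_nonneg (hgpos _ hm1mem).le hgm.le) hρm.le
        linarith
    apply le_antisymm
    · apply Finset.sup'_le
      intro j hj
      have hj1 : 1 ≤ j := (Finset.mem_Icc.mp hj).1
      have hρj : 0 < ρ j := hpos j hj
      rcases lt_trichotomy j m with hlt | heq | hgt
      · -- j < m : e ≥ ρ j, so min = 1
        have h1 : m ≠ 1 := by omega
        have hm1mem : m - 1 ∈ Finset.Icc 1 K := Finset.mem_Icc.mpr ⟨by omega, by omega⟩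
        rw [if_neg h1] at he1
        have hgm1 : 0 < g (ρ (m-1)) := hgpos _ hm1mem
        -- ρ j ≤ ρ (m-1)
        have hρjle : ρ j ≤ ρ (m-1) := by
          rcases eq_or_lt_of_le (show j ≤ m - 1 by omega) with h | h
          · rw [h]
          · exact (hinc j hj (m-1) hm1mem h).le
        -- ρ (m-1) < lower breakpoint ≤ e
        have hbr : ρ (m-1) < g (ρ (m-1)) / g (ρ m) * ρ m := by
          have := hratio (m-1) hm1mem m hm (by omega)
          rw [div_mul_eq_mul_div, lt_div_iff₀ hgm]
          nlinarith
        have hje : ρ j ≤ e := le_of_lt (lt_of_le_of_lt hρjle (lt_of_lt_of_le hbr he1))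
        have hmin : min (e / ρ j) 1 = 1 := min_eq_right ((one_le_div hρj).mpr hje)
        rw [hmin, mul_one]
        -- g(ρ j) ≤ g(ρ (m-1)) ≤ g(ρ m) * (e/ρ m)
        have hg1 : g (ρ j) ≤ g (ρ (m-1)) := by
          rcases eq_or_lt_of_le (show j ≤ m - 1 by omega) with h | h
          · rw [h]
          · exact (hgmono j hj (m-1) hm1mem h).le
        rw [div_mul_eq_mul_div, div_le_iff₀ hgm] at he1
        rw [mul_div_assoc', le_div_iff₀ hρm]
        nlinarith
      · subst heq
        have hmin : min (e / ρ j) 1 = e / ρ j :=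
          min_eq_left (le_of_lt ((div_lt_one hρj).mpr he2))
        rw [hmin]
      · -- j > m : e < ρ j, min = e/ρ j, and ratios decrease
        have hρlt : ρ m < ρ j := hinc m hm j hj hgt
        have hej : e < ρ j := he2.trans hρlt
        have hmin : min (e / ρ j) 1 = e / ρ j :=
          min_eq_left (le_of_lt ((div_lt_one hρj).mpr hej))
        rw [hmin]
        have hr := hratio m hm j hj hgt
        rw [mul_div_assoc', mul_div_assoc', div_le_div_iff₀ hρj hρm]
        nlinarith
    · have hmin : min (e / ρ m) 1 = e / ρ m :=
        min_eq_left (le_of_lt ((div_lt_one hρm).mpr he2))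
      have : g (ρ m) * (e / ρ m) = g (ρ m) * min (e / ρ m) 1 := by rw [hmin]
      rw [this]
      exact Finset.le_sup' (fun k => g (ρ k) * min (e / ρ k) 1) hm
  · -- flat pieces
    intro m hm e he
    have hm1 : 1 ≤ m := (Finset.mem_Icc.mp hm).1
    have hmK : m ≤ K := (Finset.mem_Icc.mp hm).2
    have hρm : 0 < ρ m := hpos m hm
    have hgm : 0 < g (ρ m) := hgpos m hm
    have he0 : 0 < e := lt_of_lt_of_le hρm he
    have hVge : ∀ c : ℝ, c = g (ρ m) → c ≤ V1 e := by
      intro c hc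
      have hmin : min (e / ρ m) 1 = 1 := min_eq_right ((one_le_div hρm).mpr he)
      have : c = g (ρ m) * min (e / ρ m) 1 := by rw [hmin, mul_one, hc]
      rw [this]
      exact Finset.le_sup' (fun k => g (ρ k) * min (e / ρ k) 1) hm
    constructor
    · intro hmltK hlt
      have hm1mem : m + 1 ∈ Finset.Icc 1 K := Finset.mem_Icc.mpr ⟨by omega, by omega⟩
      have hgm1 : 0 < g (ρ (m+1)) := hgpos _ hm1mem
      have hρm1 : 0 < ρ (m+1) := hpos _ hm1mem
      rw [div_mul_eq_mul_div, lt_div_iff₀ hgm1] at hlt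
      apply le_antisymm
      · apply Finset.sup'_le
        intro j hj
        have hj1 : 1 ≤ j := (Finset.mem_Icc.mp hj).1
        have hρj : 0 < ρ j := hpos j hj
        rcases le_or_gt j m with hle | hgt
        · have hgj : g (ρ j) ≤ g (ρ m) := by
            rcases eq_or_lt_of_le hle with h | h
            · rw [h]
            · exact (hgmono j hj m hm h).le
          calc g (ρ j) * min (e / ρ j) 1 ≤ g (ρ j) * 1 :=
                mul_le_mul_of_nonneg_left (min_le_right _ _) (hgpos j hj).le
            _ = g (ρ j) := mul_one _
            _ ≤ g (ρ m) := hgj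
        · -- j ≥ m+1
          have h1 : g (ρ j) * ρ (m+1) ≤ g (ρ (m+1)) * ρ j := by
            rcases eq_or_lt_of_le (show m + 1 ≤ j by omega) with h | h
            · rw [← h]
            · exact (hratio (m+1) hm1mem j hj h).le
          -- e < ρ (m+1) ≤ ρ j
          have hem1 : e < ρ (m+1) := by
            have hglt : g (ρ m) < g (ρ (m+1)) := hgmono m hm (m+1) hm1mem (by omega)
            nlinarith
          have hej : e < ρ j := by
            rcases eq_or_lt_of_le (show m + 1 ≤ j by omega) with h | h
            · rwa [← h]
            · exact hem1.trans (hinc (m+1) hm1mem j hj h)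
          have hmin : min (e / ρ j) 1 = e / ρ j :=
            min_eq_left (le_of_lt ((div_lt_one hρj).mpr hej))
          rw [hmin, mul_div_assoc', div_le_iff₀ hρj]
          nlinarith [mul_le_mul_of_nonneg_right h1 he0.le,
            mul_lt_mul_of_pos_right hlt hρj]
      · exact hVge _ rfl
    · intro hmeqK
      subst hmeqK
      apply le_antisymm
      · apply Finset.sup'_le
        intro j hj
        have hgj : g (ρ j) ≤ g (ρ m) := by
          rcases eq_or_lt_of_le (Finset.mem_Icc.mp hj).2 with h | h
          · rw [h]
          · exact (hgmono j hj m hm h).le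
        calc g (ρ j) * min (e / ρ j) 1 ≤ g (ρ j) * 1 :=
              mul_le_mul_of_nonneg_left (min_le_right _ _) (hgpos j hj).le
          _ = g (ρ j) := mul_one _
          _ ≤ g (ρ m) := hgj
      · exact hVge _ rfl
  · -- continuity
    apply cont_sup' hne (fun m e => g (ρ m) * min (e / ρ m) 1)
    intro i _
    exact continuous_const.mul ((continuous_id.div_const _).min continuous_const)
  · -- monotone
    intro a _ b _ hab
    apply Finset.sup'_le
    intro j hj
    refine le_trans ?_ (Finset.le_sup' (fun k => g (ρ k) * min (b / ρ k) 1) hj)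
    have hρj : 0 < ρ j := hpos j hj
    gcongr
    exact (hgpos j hj).le
end
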